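/- Let G be a graph and suppose vertex v dominates vertex u, i.e., N[u] ⊆ N[v]. Then there exists a minimum cPCP-set of G that either contains v, or contains neither v nor u. -/

import Mathlib

/-- if `v` dominates `u` (`N[u] ⊆ N[v]`) then there is a minimum cPCP-set
containing `v` or containing neither `v` nor `u`. -/
theorem stmt2 {V : Type*} [Fintype V] (G : SimpleGraph V) (u v : V)
    (hdom : ∀ w, (w = u ∨ G.Adj u w) → (w = v ∨ G.Adj v w)) :
    ∃ S : Set V, (∀ z ∉ S, {y | G.Adj z y ∧ y ∉ S}.ncard ≤ 2) ∧
      (∀ S' : Set V, (∀ z ∉ S', {y | G.Adj z y ∧ y ∉ S'}.ncard ≤ 2) → S.ncard ≤ S'.ncard) ∧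
      (v ∈ S ∨ (v ∉ S ∧ u ∉ S)) := by
  classical
  set P : Set V → Prop := fun S => ∀ z ∉ S, {y | G.Adj z y ∧ y ∉ S}.ncard ≤ 2 with hPdef
  have hne : {n | ∃ S, P S ∧ S.ncard = n}.Nonempty := by
    refine ⟨(Set.univ : Set V).ncard, Set.univ, ?_, rfl⟩
    intro z hz; simp at hz
  obtain ⟨S, hS, hScard⟩ := Nat.sInf_mem hne
  have hmin : ∀ S' : Set V, P S' → S.ncard ≤ S'.ncard := by
    intro S' hS'
    rw [hScard]
    exact Nat.sInf_le ⟨S', hS', rfl⟩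
  by_cases hv : v ∈ S
  · exact ⟨S, hS, hmin, Or.inl hv⟩
  by_cases hu : u ∈ S
  swap
  · exact ⟨S, hS, hmin, Or.inr ⟨hv, hu⟩⟩
  -- v ∉ S, u ∈ S : swap u for v
  set T : Set V := insert v (S \ {u}) with hTdef
  have hvneu : v ≠ u := fun h => hv (h ▸ hu)
  have hTcard : T.ncard = S.ncard := by
    rw [hTdef, Set.ncard_insert_of_notMem (by simp [hv]) ((S.toFinite.diff (t := {u}))),
      Set.ncard_diff_singleton_add_one hu S.toFinite]
  have hPT : P T := by
    intro z hz
    simp only [hTdef, Set.mem_insert_iff, Set.mem_diff, Set.mem_singleton_iff, not_or] at hz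
    obtain ⟨hzv, hz2⟩ := hz
    by_cases hzu : z = u
    · subst hzu
      -- neighbors of u outside T are neighbors of v outside S
      have hsub : {y | G.Adj z y ∧ y ∉ T} ⊆ {y | G.Adj v y ∧ y ∉ S} := by
        rintro y ⟨hadj, hyT⟩
        have hyv : y ≠ v := fun h => hyT (h ▸ (Set.mem_insert v _))
        have hvy : G.Adj v y := by
          rcases hdom y (Or.inr hadj) with h | h
          · exact absurd h hyv
          · exact h
        have hyu : y ≠ z := fun h => (h ▸ hadj).ne' rfl
        have hyS : y ∉ S := by
          intro hyS
          exact hyT (Set.mem_insert_of_mem _ ⟨hyS, hyu⟩)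
        exact ⟨hvy, hyS⟩
      calc {y | G.Adj z y ∧ y ∉ T}.ncard ≤ {y | G.Adj v y ∧ y ∉ S}.ncard :=
            Set.ncard_le_ncard hsub (Set.toFinite _)
        _ ≤ 2 := hS v hv
    · have hzS : z ∉ S := fun h => (hz2 ⟨h, hzu⟩)
      by_cases hadj : G.Adj z u
      · -- v is a neighbor of z outside S
        have hzv' : G.Adj z v := by
          rcases hdom z (Or.inr hadj.symm) with h | h
          · exact absurd h hzv
          · exact h.symm
        have hvmem : v ∈ {y | G.Adj z y ∧ y ∉ S} := ⟨hzv', hv⟩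
        have hsub : {y | G.Adj z y ∧ y ∉ T} ⊆ insert u ({y | G.Adj z y ∧ y ∉ S} \ {v}) := by
          rintro y ⟨hadjy, hyT⟩
          have hyv : y ≠ v := fun h => hyT (h ▸ (Set.mem_insert v _))
          by_cases hyu : y = u
          · subst hyu; exact Set.mem_insert _ _
          · have hyS : y ∉ S := fun h => hyT (Set.mem_insert_of_mem _ ⟨h, hyu⟩)
            exact Set.mem_insert_of_mem _ ⟨⟨hadjy, hyS⟩, hyv⟩
        have h1 : {y | G.Adj z y ∧ y ∉ T}.ncard
            ≤ (insert u ({y | G.Adj z y ∧ y ∉ S} \ {v})).ncard :=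
          Set.ncard_le_ncard hsub ((Set.toFinite _).insert u)
        have h2 : (insert u ({y | G.Adj z y ∧ y ∉ S} \ {v})).ncard
            ≤ ({y | G.Adj z y ∧ y ∉ S} \ {v}).ncard + 1 := Set.ncard_insert_le _ _
        have h3 : ({y | G.Adj z y ∧ y ∉ S} \ {v}).ncard
            = {y | G.Adj z y ∧ y ∉ S}.ncard - 1 :=
          Set.ncard_diff_singleton_of_mem hvmem
        have h4 : 1 ≤ {y | G.Adj z y ∧ y ∉ S}.ncard :=
          (Set.ncard_pos (Set.toFinite _)).mpr ⟨v, hvmem⟩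
        have h5 := hS z hzS
        omega
      · have hsub : {y | G.Adj z y ∧ y ∉ T} ⊆ {y | G.Adj z y ∧ y ∉ S} := by
          rintro y ⟨hadjy, hyT⟩
          refine ⟨hadjy, fun hyS => ?_⟩
          have hyu : y ≠ u := fun h => hadj (h ▸ hadjy)
          exact hyT (Set.mem_insert_of_mem _ ⟨hyS, hyu⟩)
        calc {y | G.Adj z y ∧ y ∉ T}.ncard ≤ {y | G.Adj z y ∧ y ∉ S}.ncard :=
              Set.ncard_le_ncard hsub (Set.toFinite _)
          _ ≤ 2 := hS z hzS
  refine ⟨T, hPT, ?_, Or.inl (Set.mem_insert v _)⟩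
  intro S' hS'
  rw [hTcard]
  exact hmin S' hS'
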